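/- arXiv:1907.02296 — 4 statements merged into one kernel-verified Lean document; each statement's English description precedes it below -/
import Mathlib

section
/- Post property of local zone transitions: if (q,Z) =u=> (q',Z') is a sequence of local zone transitions and v' ∈ Z', then there exists v ∈ Z and a local run (q,v) =u=> (q',v'). -/
open Classical

/-- Comparison operators appearing in guards `x ~ c`. -/
inductive Cmp | lt | le | eq | ge | gt

def Cmp.sat : Cmp → ℝ → ℤ → Prop
  | .lt, r, c => r < (c : ℝ)
  | .le, r, c => r ≤ (c : ℝ)
  | .eq, r, c => r = (c : ℝ)
  | .ge, r, c => (c : ℝ) ≤ r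
  | .gt, r, c => (c : ℝ) < r

/-- A guard: a finite conjunction of constraints `x ~ c` on clocks. -/
abbrev Guard (Clock : Type) := List (Clock × Cmp × ℤ)

/-- A difference constraint `y₁ - y₂ ◁ c` over variables `V`;
the boolean is `true` for strict `<` and `false` for `≤`. -/
abbrev DiffConstraint (V : Type) := V × V × Bool × ℤ

/-- Satisfaction of a difference constraint. -/
def csat {V : Type} (v : V → ℝ) (c : DiffConstraint V) : Prop :=
  if c.2.2.1 then v c.1 - v c.2.1 < (c.2.2.2 : ℝ) else v c.1 - v c.2.1 ≤ (c.2.2.2 : ℝ)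

/-- A network of timed automata: `k` processes, each owning its clocks and
locations; each action `b` has a domain `dom b` of synchronizing processes, and
for each process in the domain a set of `b`-transitions (location, guard, reset
set, target location), whose guards and resets only mention own clocks. -/
structure Network where
  k : ℕ
  kpos : 0 < k
  Clock : Type
  [clockFin : Fintype Clock]
  owner : Clock → Fin k
  Act : Type
  dom : Act → Finset (Fin k)
  Loc : Fin k → Type
  init : ∀ p, Loc p
  Trans : ∀ (_ : Act) (p : Fin k), Set (Loc p × Guard Clock × Set Clock × Loc p)
  trans_wf : ∀ b p tr, tr ∈ Trans b p →
    (∀ c ∈ tr.2.1, owner c.1 = p) ∧ (∀ x ∈ tr.2.2.1, owner x = p)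

attribute [instance] Network.clockFin

namespace Network

variable (N : Network)

/-- Global (discrete) states of the network. -/
abbrev State := ∀ p, N.Loc p

/-- Variables of local valuations: offset variables `x̃` and reference clocks `t_p`. -/
abbrev LVar := N.Clock ⊕ Fin N.k

/-- Variables of global valuations: offset variables `x̃` and the global reference clock `t`. -/
abbrev GVar := N.Clock ⊕ Unit

abbrev LVal := N.LVar → ℝ

abbrev GVal := N.GVar → ℝ

/-- A local valuation: nonnegative, and each offset is below the owner's reference clock. -/
def IsLVal (v : N.LVal) : Prop :=
  (∀ y, 0 ≤ v y) ∧ ∀ x : N.Clock, v (.inl x) ≤ v (.inr (N.owner x))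

/-- A global valuation: nonnegative, and each offset is below the global time `t`. -/
def IsGVal (v : N.GVal) : Prop :=
  (∀ y, 0 ≤ v y) ∧ ∀ x : N.Clock, v (.inl x) ≤ v (.inr ())

/-- Satisfaction of a guard by a local valuation: the value of clock `x` is
`v t_p - v x̃` where `p` owns `x`. -/
def lgsat (v : N.LVal) (g : Guard N.Clock) : Prop :=
  ∀ c ∈ g, Cmp.sat c.2.1 (v (.inr (N.owner c.1)) - v (.inl c.1)) c.2.2

/-- Satisfaction of a guard by a global valuation: the value of clock `x` is `v t - v x̃`. -/
def ggsat (v : N.GVal) (g : Guard N.Clock) : Prop :=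
  ∀ c ∈ g, Cmp.sat c.2.1 (v (.inr ()) - v (.inl c.1)) c.2.2

/-- Global delay: only the global reference clock advances. -/
def gdelay (v : N.GVal) (δ : ℝ) : N.GVal :=
  fun y => match y with
    | .inl x => v (.inl x)
    | .inr _ => v (.inr ()) + δ

/-- `v'` is obtained from `v` by a (finite) sequence of local delays; equivalently,
each reference clock advances by some nonnegative amount, offsets are unchanged. -/
def ldelayed (v v' : N.LVal) : Prop :=
  ∃ δ : Fin N.k → ℝ, (∀ p, 0 ≤ δ p) ∧
    v' = fun y => match y with
      | .inl x => v (.inl x)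
      | .inr p => v (.inr p) + δ p

/-- Reset of the clocks in `R` in a global valuation. -/
noncomputable def greset (R : Set N.Clock) (v : N.GVal) : N.GVal :=
  fun y => match y with
    | .inl x => if x ∈ R then v (.inr ()) else v (.inl x)
    | .inr u => v (.inr u)

/-- Reset of the clocks in `R` in a local valuation: `x̃` is set to the local
time of the process owning `x`. -/
noncomputable def lreset (R : Set N.Clock) (v : N.LVal) : N.LVal :=
  fun y => match y with
    | .inl x => if x ∈ R then v (.inr (N.owner x)) else v (.inl x)
    | .inr p => v (.inr p)

/-- Global action step on action `b`. -/
def gact (b : N.Act) (c c' : N.State × N.GVal) : Prop :=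
  ∃ tr : ∀ p, p ∈ N.dom b → N.Loc p × Guard N.Clock × Set N.Clock × N.Loc p,
    (∀ p (h : p ∈ N.dom b),
      tr p h ∈ N.Trans b p ∧ (tr p h).1 = c.1 p ∧ (tr p h).2.2.2 = c'.1 p) ∧
    (∀ p, p ∉ N.dom b → c'.1 p = c.1 p) ∧
    (∀ p (h : p ∈ N.dom b), N.ggsat c.2 (tr p h).2.1) ∧
    c'.2 = N.greset {x | ∃ p h, x ∈ (tr p h).2.2.1} c.2

/-- Local action step on action `b`: additionally the reference clocks of the
processes in `dom b` must agree. -/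
def lact (b : N.Act) (c c' : N.State × N.LVal) : Prop :=
  ∃ tr : ∀ p, p ∈ N.dom b → N.Loc p × Guard N.Clock × Set N.Clock × N.Loc p,
    (∀ p (h : p ∈ N.dom b),
      tr p h ∈ N.Trans b p ∧ (tr p h).1 = c.1 p ∧ (tr p h).2.2.2 = c'.1 p) ∧
    (∀ p, p ∉ N.dom b → c'.1 p = c.1 p) ∧
    (∀ p ∈ N.dom b, ∀ p' ∈ N.dom b, c.2 (.inr p) = c.2 (.inr p')) ∧
    (∀ p (h : p ∈ N.dom b), N.lgsat c.2 (tr p h).2.1) ∧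
    c'.2 = N.lreset {x | ∃ p h, x ∈ (tr p h).2.2.1} c.2

/-- Global run on a word of actions: delays and action steps alternate,
starting and ending with a (possibly zero) delay. -/
inductive GRun : List N.Act → (N.State × N.GVal) → (N.State × N.GVal) → Prop
  | nil {q v} (δ : ℝ) (hδ : 0 ≤ δ) : GRun [] (q, v) (q, N.gdelay v δ)
  | cons {b u q v c1 c2} (δ : ℝ) (hδ : 0 ≤ δ)
      (hb : N.gact b (q, N.gdelay v δ) c1) (h : GRun u c1 c2) :
      GRun (b :: u) (q, v) c2

/-- Local run on a word of actions: sequences of local delays and local action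
steps alternate. -/
inductive LRun : List N.Act → (N.State × N.LVal) → (N.State × N.LVal) → Prop
  | nil {q v v'} (hd : N.ldelayed v v') : LRun [] (q, v) (q, v')
  | cons {b u q v v1 c1 c2} (hd : N.ldelayed v v1)
      (hb : N.lact b (q, v1) c1) (h : LRun u c1 c2) :
      LRun (b :: u) (q, v) c2

/-- Local run recording, for each action, its execution time: the common value
of the reference clocks of `dom b` when the step is taken. -/
inductive LRunT : List (N.Act × ℝ) → (N.State × N.LVal) → (N.State × N.LVal) → Prop
  | nil {q v v'} (hd : N.ldelayed v v') : LRunT [] (q, v) (q, v')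
  | cons {b θ u q v v1 c1 c2} (hd : N.ldelayed v v1)
      (hb : N.lact b (q, v1) c1) (hθ : ∀ p ∈ N.dom b, v1 (.inr p) = θ)
      (h : LRunT u c1 c2) :
      LRunT ((b, θ) :: u) (q, v) c2

/-- Equivalence of action sequences: generated by swapping adjacent actions
with disjoint domains. -/
inductive equiv : List N.Act → List N.Act → Prop
  | swap (u w : List N.Act) (a b : N.Act) (h : Disjoint (N.dom a) (N.dom b)) :
      equiv (u ++ a :: b :: w) (u ++ b :: a :: w)
  | refl (u : List N.Act) : equiv u u
  | trans {u v w} : equiv u v → equiv v w → equiv u w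

/-- A local valuation is synchronized if all reference clocks agree. -/
def Synchronized (v : N.LVal) : Prop :=
  ∀ p p' : Fin N.k, v (.inr p) = v (.inr p')

/-- The global valuation associated to a (synchronized) local valuation. -/
def toGlobal (v : N.LVal) : N.GVal :=
  fun y => match y with
    | .inl x => v (.inl x)
    | .inr _ => v (.inr ⟨0, N.kpos⟩)

/-- The synchronized local valuation associated to a global valuation. -/
def toLocal (v : N.GVal) : N.LVal :=
  fun y => match y with
    | .inl x => v (.inl x)
    | .inr _ => v (.inr ())

/-- The synchronized valuations of a set of local valuations. -/
def syncSet (S : Set N.LVal) : Set N.LVal := {v ∈ S | N.Synchronized v}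

/-- The set of local valuations defined by a list of difference constraints. -/
def lzset (L : List (DiffConstraint N.LVar)) : Set N.LVal :=
  {v | N.IsLVal v ∧ ∀ c ∈ L, csat v c}

/-- The set of global valuations defined by a list of difference constraints. -/
def gzset (L : List (DiffConstraint N.GVar)) : Set N.GVal :=
  {v | N.IsGVal v ∧ ∀ c ∈ L, csat v c}

/-- Local zones: sets of local valuations definable by difference constraints. -/
def IsLZone (S : Set N.LVal) : Prop := ∃ L, S = N.lzset L

/-- Global zones: sets of global valuations definable by difference constraints. -/
def IsGZone (S : Set N.GVal) : Prop := ∃ L, S = N.gzset L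

/-- Local-time elapse of a set of local valuations. -/
def lelapse (S : Set N.LVal) : Set N.LVal := {v' | ∃ v ∈ S, N.ldelayed v v'}

/-- Global time elapse of a set of global valuations. -/
def gelapse (S : Set N.GVal) : Set N.GVal :=
  {v' | ∃ v ∈ S, ∃ δ, 0 ≤ δ ∧ v' = N.gdelay v δ}

/-- Local zone graph step on action `b`:
`Z' = local-elapse([R](Z ∩ Z_g ∩ Z_sync))`, required nonempty. -/
def lzstep (b : N.Act) (c c' : N.State × Set N.LVal) : Prop :=
  ∃ tr : ∀ p, p ∈ N.dom b → N.Loc p × Guard N.Clock × Set N.Clock × N.Loc p,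
    (∀ p (h : p ∈ N.dom b),
      tr p h ∈ N.Trans b p ∧ (tr p h).1 = c.1 p ∧ (tr p h).2.2.2 = c'.1 p) ∧
    (∀ p, p ∉ N.dom b → c'.1 p = c.1 p) ∧
    c'.2 = N.lelapse ((N.lreset {x | ∃ p h, x ∈ (tr p h).2.2.1}) ''
      (c.2 ∩ {v | ∀ p (h : p ∈ N.dom b), N.lgsat v (tr p h).2.1}
           ∩ {v | ∀ p ∈ N.dom b, ∀ p' ∈ N.dom b, v (.inr p) = v (.inr p')})) ∧
    (c'.2).Nonempty

/-- Sequence of local zone graph steps along a word. -/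
inductive LZRun : List N.Act → (N.State × Set N.LVal) → (N.State × Set N.LVal) → Prop
  | nil (c) : LZRun [] c c
  | cons {b u c c1 c2} (hb : N.lzstep b c c1) (h : LZRun u c1 c2) :
      LZRun (b :: u) c c2

/-- The initial (discrete) state of the network. -/
def initState : N.State := N.init

/-- The initial global valuation: everything is `0`. -/
def gvalInit : N.GVal := fun _ => 0

/-- The initial local valuation: everything is `0`. -/
def lvalInit : N.LVal := fun _ => 0

/-- The initial node's zone in the local zone graph. -/
def lzoneInit : Set N.LVal := N.lelapse {N.lvalInit}

/-- State `q` is reachable in the global-time semantics. -/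
def GReach (q : N.State) : Prop :=
  ∃ u v, N.GRun u (N.initState, N.gvalInit) (q, v)

/-- State `q` is reachable in the local-time semantics. -/
def LReach (q : N.State) : Prop :=
  ∃ u v, N.LRun u (N.initState, N.lvalInit) (q, v)

/-- Time-abstract simulation between global valuations. -/
def TASim (sim : N.GVal → N.GVal → Prop) : Prop :=
  ∀ v1 v2, sim v1 v2 → ∀ q b δ1 q' v1', 0 ≤ δ1 →
    N.gact b (q, N.gdelay v1 δ1) (q', v1') →
    ∃ δ2, 0 ≤ δ2 ∧ ∃ v2', N.gact b (q, N.gdelay v2 δ2) (q', v2') ∧ sim v1' v2'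

end Network

/-- A local sync graph over a network `N`, based on an abstraction `abs` over
global zones: a subgraph of the local zone graph with covered/uncovered nodes,
satisfying conditions C0–C4. -/
structure SyncGraph (N : Network) (abs : Set N.GVal → Set N.GVal) where
  nodes : Set (N.State × Set N.LVal)
  covered : N.State × Set N.LVal → Prop
  edges : (N.State × Set N.LVal) → (N.State × Set N.LVal) → Prop
  edges_mem : ∀ s s', edges s s' → s ∈ nodes ∧ s' ∈ nodes
  edges_lzg : ∀ s s', edges s s' → ∃ b, N.lzstep b s s'
  init_mem : (N.initState, N.lzoneInit) ∈ nodes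
  init_unc : ¬ covered (N.initState, N.lzoneInit)
  reach : ∀ s ∈ nodes, Relation.ReflTransGen edges (N.initState, N.lzoneInit) s
  unc_succ : ∀ s ∈ nodes, ¬ covered s → ∀ b s', N.lzstep b s s' → edges s s'
  cov_sub : ∀ s ∈ nodes, covered s → ∃ s' ∈ nodes, ¬ covered s' ∧ s.1 = s'.1 ∧
    N.toGlobal '' N.syncSet s.2 ⊆ abs (N.toGlobal '' N.syncSet s'.2)
  cov_nosucc : ∀ s s', covered s → ¬ edges s s'

/-- A list of difference constraints is canonical (every constraint is tight):
no constraint is implied by the remaining ones. -/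
def canonicalL (N : Network) (L : List (DiffConstraint N.LVar)) : Prop :=
  ∀ c ∈ L, ∃ v, N.IsLVal v ∧ (∀ c' ∈ L, c' ≠ c → csat v c') ∧ ¬ csat v c

/-- Minea's region-like equivalence with maximal constant `cmax`. -/
def regEquiv {V : Type} (cmax : ℤ) (v1 v2 : V → ℝ) : Prop :=
  ∀ a b : V, (⌊v1 a - v1 b⌋ = ⌊v2 a - v2 b⌋) ∨
    (⌊v1 a - v1 b⌋ > cmax ∧ ⌊v2 a - v2 b⌋ > cmax) ∨
    (⌊v1 a - v1 b⌋ < -cmax ∧ ⌊v2 a - v2 b⌋ < -cmax)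

lemma ldelayed_refl (N : Network) (v : N.LVal) : N.ldelayed v v := by
  refine ⟨fun _ => 0, fun _ => le_refl 0, ?_⟩
  funext y; cases y <;> simp

lemma ldelayed_trans (N : Network) {a b c : N.LVal}
    (h1 : N.ldelayed a b) (h2 : N.ldelayed b c) : N.ldelayed a c := by
  obtain ⟨d1, hd1, rfl⟩ := h1
  obtain ⟨d2, hd2, rfl⟩ := h2
  refine ⟨fun p => d1 p + d2 p, fun p => add_nonneg (hd1 p) (hd2 p), ?_⟩
  funext y; cases y <;> simp <;> ring

lemma lrun_absorb (N : Network) {u q a b c} (hd : N.ldelayed a b)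
    (h : N.LRun u (q, b) c) : N.LRun u (q, a) c := by
  cases h with
  | nil hd' => exact Network.LRun.nil (ldelayed_trans N hd hd')
  | cons hd' hb h' => exact Network.LRun.cons (ldelayed_trans N hd hd') hb h'

lemma stmt10_aux (N : Network) (u : List N.Act) (c c' : N.State × Set N.LVal)
    (hr : N.LZRun u c c') (v' : N.LVal) (hv' : v' ∈ c'.2) :
    ∃ v ∈ c.2, N.LRun u (c.1, v) (c'.1, v') := by
  induction hr generalizing v' with
  | nil c =>
      exact ⟨v', hv', Network.LRun.nil (ldelayed_refl N v')⟩
  | @cons b u' c c1 c2 hb h ih =>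
      obtain ⟨v1, hv1, hrun⟩ := ih v' hv'
      obtain ⟨tr, htr, hoff, hZ1, _⟩ := hb
      rw [hZ1] at hv1
      obtain ⟨w0, hw0, hdel⟩ := hv1
      obtain ⟨w, hw, rfl⟩ := hw0
      obtain ⟨⟨hwZ, hwg⟩, hws⟩ := hw
      refine ⟨w, hwZ, ?_⟩
      refine Network.LRun.cons (ldelayed_refl N w) ?_ (lrun_absorb N hdel hrun)
      exact ⟨tr, htr, hoff, hws, hwg, rfl⟩

theorem stmt10 (N : Network) (u : List N.Act) (q q' : N.State)
    (Z Z' : Set N.LVal) (hr : N.LZRun u (q, Z) (q', Z'))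
    (v' : N.LVal) (hv' : v' ∈ Z') :
    ∃ v ∈ Z, N.LRun u (q, v) (q', v') :=
  stmt10_aux N u (q, Z) (q', Z') hr v' hv'
end

section
/- Commutativity on local zones: if dom(a) ∩ dom(b) = ∅ and (q,Z) =ab=> (q',Z') in the local zone graph, then (q,Z) =ba=> (q',Z') — the same state and the exact same local zone are reached. -/
open Classical

namespace Network

lemma ldelayed_self (N : Network) (v : N.LVal) : N.ldelayed v v := by
  refine ⟨fun _ => 0, fun _ => le_refl 0, ?_⟩
  funext y; cases y <;> simp

/-- Key lemma: the `ab` zone is included in the `ba` zone. -/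
lemma swap_subset (N : Network) (a b : N.Act) (hd : Disjoint (N.dom a) (N.dom b))
    (Z : Set N.LVal) (hte : Z = N.lelapse Z)
    (tra : ∀ p, p ∈ N.dom a → N.Loc p × Guard N.Clock × Set N.Clock × N.Loc p)
    (trb : ∀ p, p ∈ N.dom b → N.Loc p × Guard N.Clock × Set N.Clock × N.Loc p)
    (hwa : ∀ p h, tra p h ∈ N.Trans a p) (hwb : ∀ p h, trb p h ∈ N.Trans b p) :
    N.lelapse ((N.lreset {x | ∃ p h, x ∈ (trb p h).2.2.1}) ''
      ((N.lelapse ((N.lreset {x | ∃ p h, x ∈ (tra p h).2.2.1}) ''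
          (Z ∩ {v | ∀ p (h : p ∈ N.dom a), N.lgsat v (tra p h).2.1}
             ∩ {v | ∀ p ∈ N.dom a, ∀ p' ∈ N.dom a, v (.inr p) = v (.inr p')})))
        ∩ {v | ∀ p (h : p ∈ N.dom b), N.lgsat v (trb p h).2.1}
        ∩ {v | ∀ p ∈ N.dom b, ∀ p' ∈ N.dom b, v (.inr p) = v (.inr p')}))
    ⊆ N.lelapse ((N.lreset {x | ∃ p h, x ∈ (tra p h).2.2.1}) ''
      ((N.lelapse ((N.lreset {x | ∃ p h, x ∈ (trb p h).2.2.1}) ''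
          (Z ∩ {v | ∀ p (h : p ∈ N.dom b), N.lgsat v (trb p h).2.1}
             ∩ {v | ∀ p ∈ N.dom b, ∀ p' ∈ N.dom b, v (.inr p) = v (.inr p')})))
        ∩ {v | ∀ p (h : p ∈ N.dom a), N.lgsat v (tra p h).2.1}
        ∩ {v | ∀ p ∈ N.dom a, ∀ p' ∈ N.dom a, v (.inr p) = v (.inr p')})) := by
  set Ra : Set N.Clock := {x | ∃ p h, x ∈ (tra p h).2.2.1} with hRadef
  set Rb : Set N.Clock := {x | ∃ p h, x ∈ (trb p h).2.2.1} with hRbdef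
  have hRa : ∀ x ∈ Ra, N.owner x ∈ N.dom a := by
    rintro x ⟨p, h, hx⟩
    have := (N.trans_wf a p _ (hwa p h)).2 x hx
    rw [this]; exact h
  have hRb : ∀ x ∈ Rb, N.owner x ∈ N.dom b := by
    rintro x ⟨p, h, hx⟩
    have := (N.trans_wf b p _ (hwb p h)).2 x hx
    rw [this]; exact h
  have hdab : ∀ p, p ∈ N.dom a → p ∉ N.dom b := fun p ha hb =>
    Finset.disjoint_left.1 hd ha hb
  have hdba : ∀ p, p ∈ N.dom b → p ∉ N.dom a := fun p hb ha =>
    Finset.disjoint_left.1 hd ha hb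
  rintro v' ⟨u, ⟨w1, ⟨⟨hw1X, hw1Gb⟩, hw1Sb⟩, rfl⟩, δ2, hδ2pos, hv'eq⟩
  obtain ⟨w, ⟨v, ⟨⟨hvZ, hvGa⟩, hvSa⟩, rfl⟩, δ1, hδ1pos, hw1eq⟩ := hw1X
  -- pointwise descriptions
  have w1r : ∀ p, w1 (.inr p) = v (.inr p) + δ1 p := by
    intro p; rw [hw1eq]; rfl
  have w1lin : ∀ x, x ∈ Ra → w1 (.inl x) = v (.inr (N.owner x)) := by
    intro x hx
    have h := congrFun hw1eq (Sum.inl x : N.LVar)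
    simpa [Network.lreset, hx] using h
  have w1lout : ∀ x, x ∉ Ra → w1 (.inl x) = v (.inl x) := by
    intro x hx
    have h := congrFun hw1eq (Sum.inl x : N.LVar)
    simpa [Network.lreset, hx] using h
  have v'r : ∀ p, v' (.inr p) = w1 (.inr p) + δ2 p := by
    intro p; rw [hv'eq]; rfl
  have v'lin : ∀ x, x ∈ Rb → v' (.inl x) = w1 (.inr (N.owner x)) := by
    intro x hx
    have h := congrFun hv'eq (Sum.inl x : N.LVar)
    simpa [Network.lreset, hx] using h
  have v'lout : ∀ x, x ∉ Rb → v' (.inl x) = w1 (.inl x) := by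
    intro x hx
    have h := congrFun hv'eq (Sum.inl x : N.LVar)
    simpa [Network.lreset, hx] using h
  -- the new intermediate valuation
  set δ1' : Fin N.k → ℝ := fun p => if p ∈ N.dom a then 0 else δ1 p with hδ1'def
  set v₁ : N.LVal := fun y => match y with
    | .inl x => v (.inl x)
    | .inr p => v (.inr p) + δ1' p with hv₁def
  have hv₁Z : v₁ ∈ Z := by
    rw [hte]
    exact ⟨v, hvZ, δ1', fun p => by by_cases hp : p ∈ N.dom a <;>
      simp [hδ1'def, hp, hδ1pos p], rfl⟩
  have v₁r : ∀ p, v₁ (.inr p) = v (.inr p) + δ1' p := fun p => rfl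
  have v₁l : ∀ x, v₁ (.inl x) = v (.inl x) := fun x => rfl
  -- v₁ agrees with w1 outside dom a
  have agreeRef : ∀ p, p ∉ N.dom a → v₁ (.inr p) = w1 (.inr p) := by
    intro p hp; rw [v₁r, w1r]; simp [hδ1'def, hp]
  have agreeOff : ∀ x, N.owner x ∉ N.dom a → v₁ (.inl x) = w1 (.inl x) := by
    intro x hx
    have hxRa : x ∉ Ra := fun h => hx (hRa x h)
    rw [v₁l, w1lout x hxRa]
  have hv₁Gb : ∀ p (h : p ∈ N.dom b), N.lgsat v₁ (trb p h).2.1 := by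
    intro p h c hc
    have hown : N.owner c.1 = p := (N.trans_wf b p _ (hwb p h)).1 c hc
    have h1 : v₁ (.inr (N.owner c.1)) = w1 (.inr (N.owner c.1)) :=
      agreeRef _ (by rw [hown]; exact hdba p h)
    have h2 : v₁ (.inl c.1) = w1 (.inl c.1) :=
      agreeOff _ (by rw [hown]; exact hdba p h)
    rw [h1, h2]; exact hw1Gb p h c hc
  have hv₁Sb : ∀ p ∈ N.dom b, ∀ p' ∈ N.dom b, v₁ (.inr p) = v₁ (.inr p') := by
    intro p hp p' hp'
    rw [agreeRef p (hdba p hp), agreeRef p' (hdba p' hp')]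
    exact hw1Sb p hp p' hp'
  set ub : N.LVal := N.lreset Rb v₁ with hubdef
  have ubr : ∀ p, ub (.inr p) = v₁ (.inr p) := fun p => rfl
  have ublin : ∀ x, x ∈ Rb → ub (.inl x) = v₁ (.inr (N.owner x)) := by
    intro x hx; rw [hubdef]; simp [Network.lreset, hx]
  have ublout : ∀ x, x ∉ Rb → ub (.inl x) = v₁ (.inl x) := by
    intro x hx; rw [hubdef]; simp [Network.lreset, hx]
  -- ub agrees with v on dom a
  have ubRefA : ∀ p, p ∈ N.dom a → ub (.inr p) = v (.inr p) := by
    intro p hp; rw [ubr, v₁r]; simp [hδ1'def, hp]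
  have ubOffA : ∀ x, N.owner x ∈ N.dom a → ub (.inl x) = v (.inl x) := by
    intro x hx
    have hxRb : x ∉ Rb := fun h => hdba _ (hRb x h) hx
    rw [ublout x hxRb, v₁l]
  have hubGa : ∀ p (h : p ∈ N.dom a), N.lgsat ub (tra p h).2.1 := by
    intro p h c hc
    have hown : N.owner c.1 = p := (N.trans_wf a p _ (hwa p h)).1 c hc
    rw [ubRefA _ (by rw [hown]; exact h), ubOffA _ (by rw [hown]; exact h)]
    exact hvGa p h c hc
  have hubSa : ∀ p ∈ N.dom a, ∀ p' ∈ N.dom a, ub (.inr p) = ub (.inr p') := by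
    intro p hp p' hp'
    rw [ubRefA p hp, ubRefA p' hp']
    exact hvSa p hp p' hp'
  have hubX : ub ∈ N.lelapse ((N.lreset Rb) ''
      (Z ∩ {v | ∀ p (h : p ∈ N.dom b), N.lgsat v (trb p h).2.1}
         ∩ {v | ∀ p ∈ N.dom b, ∀ p' ∈ N.dom b, v (.inr p) = v (.inr p')})) :=
    ⟨ub, ⟨v₁, ⟨⟨hv₁Z, hv₁Gb⟩, hv₁Sb⟩, rfl⟩, N.ldelayed_self ub⟩
  -- facts about the final reset
  have reslin : ∀ x, x ∈ Ra → N.lreset Ra ub (.inl x) = ub (.inr (N.owner x)) := by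
    intro x hx; simp [Network.lreset, hx]
  have reslout : ∀ x, x ∉ Ra → N.lreset Ra ub (.inl x) = ub (.inl x) := by
    intro x hx; simp [Network.lreset, hx]
  have resr : ∀ p, N.lreset Ra ub (.inr p) = ub (.inr p) := fun p => rfl
  set ε : Fin N.k → ℝ := fun p => if p ∈ N.dom a then δ1 p + δ2 p else δ2 p with hεdef
  refine ⟨N.lreset Ra ub, ⟨ub, ⟨⟨hubX, hubGa⟩, hubSa⟩, rfl⟩, ε, ?_, ?_⟩
  · intro p; by_cases hp : p ∈ N.dom a <;>
      simp [hεdef, hp, hδ1pos p, hδ2pos p, add_nonneg]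
  · funext y
    cases y with
    | inr p =>
      show v' (.inr p) = N.lreset Ra ub (.inr p) + ε p
      rw [v'r, w1r, resr, ubr, v₁r]
      by_cases hp : p ∈ N.dom a
      · simp only [hεdef, hδ1'def, if_pos hp]; ring
      · simp only [hεdef, hδ1'def, if_neg hp]
    | inl x =>
      show v' (.inl x) = N.lreset Ra ub (.inl x)
      by_cases hxb : x ∈ Rb
      · have hxa : x ∉ Ra := fun h => hdab _ (hRa x h) (hRb x hxb)
        have hob : N.owner x ∉ N.dom a := hdba _ (hRb x hxb)
        rw [v'lin x hxb, reslout x hxa, ublin x hxb, w1r, v₁r]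
        simp [hδ1'def, hob]
      · by_cases hxa : x ∈ Ra
        · rw [v'lout x hxb, w1lin x hxa, reslin x hxa, ubr, v₁r]
          simp [hδ1'def, hRa x hxa]
        · rw [v'lout x hxb, w1lout x hxa, reslout x hxa, ublout x hxb, v₁l]

end Network

theorem stmt12 (N : Network) (a b : N.Act) (hd : Disjoint (N.dom a) (N.dom b))
    (q q' : N.State) (Z Z' : Set N.LVal) (hZ : N.IsLZone Z) (hte : Z = N.lelapse Z)
    (hr : N.LZRun [a, b] (q, Z) (q', Z')) : N.LZRun [b, a] (q, Z) (q', Z') := by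
  cases hr with
  | cons hb1 h1 =>
    cases h1 with
    | cons hb2 h2 =>
      cases h2 with
      | nil =>
        rename_i c1
        obtain ⟨tra, htra, hqa, hZ1a, hZ1ane⟩ := hb1
        obtain ⟨trb, htrb, hqb, hZ'eq, hZ'ne⟩ := hb2
        have hwa : ∀ p h, tra p h ∈ N.Trans a p := fun p h => (htra p h).1
        have hwb : ∀ p h, trb p h ∈ N.Trans b p := fun p h => (htrb p h).1
        have hdab : ∀ p, p ∈ N.dom a → p ∉ N.dom b := fun p ha hb =>
          Finset.disjoint_left.1 hd ha hb
        have hdba : ∀ p, p ∈ N.dom b → p ∉ N.dom a := fun p hb ha =>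
          Finset.disjoint_left.1 hd ha hb
        rw [hZ1a] at hZ'eq
        have key1 := N.swap_subset a b hd Z hte tra trb hwa hwb
        have key2 := N.swap_subset b a (Disjoint.symm hd) Z hte trb tra hwb hwa
        have hZba : Z' = N.lelapse ((N.lreset {x | ∃ p h, x ∈ (tra p h).2.2.1}) ''
            ((N.lelapse ((N.lreset {x | ∃ p h, x ∈ (trb p h).2.2.1}) ''
                (Z ∩ {v | ∀ p (h : p ∈ N.dom b), N.lgsat v (trb p h).2.1}
                   ∩ {v | ∀ p ∈ N.dom b, ∀ p' ∈ N.dom b, v (.inr p) = v (.inr p')})))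
              ∩ {v | ∀ p (h : p ∈ N.dom a), N.lgsat v (tra p h).2.1}
              ∩ {v | ∀ p ∈ N.dom a, ∀ p' ∈ N.dom a, v (.inr p) = v (.inr p')})) :=
          hZ'eq.trans (key1.antisymm key2)
        set Z1b : Set N.LVal :=
          N.lelapse ((N.lreset {x | ∃ p h, x ∈ (trb p h).2.2.1}) ''
            (Z ∩ {v | ∀ p (h : p ∈ N.dom b), N.lgsat v (trb p h).2.1}
               ∩ {v | ∀ p ∈ N.dom b, ∀ p' ∈ N.dom b, v (.inr p) = v (.inr p')}))
          with hZ1bdef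
        have hZ1bne : Z1b.Nonempty := by
          obtain ⟨v', hv'⟩ := hZ'ne
          rw [hZba] at hv'
          obtain ⟨w, ⟨ubv, ⟨⟨hub, _⟩, _⟩, _⟩, _⟩ := hv'
          exact ⟨ubv, hub⟩
        set q1 : N.State := fun p => if h : p ∈ N.dom b then (trb p h).2.2.2 else q p
          with hq1def
        refine Network.LZRun.cons (c1 := (q1, Z1b)) ?_ (Network.LZRun.cons ?_
          (Network.LZRun.nil _))
        · refine ⟨trb, fun p h => ⟨(htrb p h).1, ?_, ?_⟩, fun p hp => ?_, rfl, hZ1bne⟩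
          · rw [(htrb p h).2.1, hqa p (hdba p h)]
          · show (trb p h).2.2.2 = if h' : p ∈ N.dom b then (trb p h').2.2.2 else q p
            rw [dif_pos h]
          · show (if h' : p ∈ N.dom b then (trb p h').2.2.2 else q p) = q p
            rw [dif_neg hp]
        · refine ⟨tra, fun p h => ⟨(htra p h).1, ?_, ?_⟩, fun p hp => ?_, hZba, hZ'ne⟩
          · show (tra p h).1 = if h' : p ∈ N.dom b then (trb p h').2.2.2 else q p
            rw [dif_neg (hdab p h), (htra p h).2.1]
          · rw [(htra p h).2.2]; exact (hqb p (hdab p h)).symm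
          · by_cases hpb : p ∈ N.dom b
            · show q' p = if h' : p ∈ N.dom b then (trb p h').2.2.2 else q p
              rw [dif_pos hpb]; exact ((htrb p hpb).2.2).symm
            · show q' p = if h' : p ∈ N.dom b then (trb p h').2.2.2 else q p
              rw [dif_neg hpb]; exact (hqb p hpb).trans (hqa p hp)
end

section
/- If (q,Z) =u=> (q',Z') in the local zone graph and u ~ w (equivalent up to swapping adjacent actions with disjoint domains), then (q,Z) =w=> (q',Z'): all equivalent interleavings lead to the same local zone. -/
open Classical

namespace Network

variable {N : Network}

lemma ldelayed_refl' (v : N.LVal) : N.ldelayed v v := by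
  refine ⟨fun _ => 0, fun _ => le_refl _, ?_⟩
  funext y; cases y <;> simp

lemma ldelayed_trans' {u v w : N.LVal} (h1 : N.ldelayed u v) (h2 : N.ldelayed v w) :
    N.ldelayed u w := by
  obtain ⟨δ1, hδ1, rfl⟩ := h1
  obtain ⟨δ2, hδ2, rfl⟩ := h2
  refine ⟨fun p => δ1 p + δ2 p, fun p => add_nonneg (hδ1 p) (hδ2 p), ?_⟩
  funext y; cases y <;> simp [add_assoc]

lemma subset_lelapse' (S : Set N.LVal) : S ⊆ N.lelapse S :=
  fun v hv => ⟨v, hv, ldelayed_refl' v⟩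

lemma lelapse_idem' (S : Set N.LVal) : N.lelapse (N.lelapse S) = N.lelapse S := by
  apply Set.Subset.antisymm
  · rintro v ⟨v1, ⟨v0, h0, hd0⟩, hd1⟩
    exact ⟨v0, h0, ldelayed_trans' hd0 hd1⟩
  · exact subset_lelapse' _

/-- Key commutation of local zone operations for disjoint domains. -/
lemma comm_key {A B : Finset (Fin N.k)} (hdis : Disjoint A B)
    {Ra Rb : Set N.Clock} (hRa : ∀ x ∈ Ra, N.owner x ∈ A) (hRb : ∀ x ∈ Rb, N.owner x ∈ B)
    {Ga Sa Gb Sb : Set N.LVal}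
    (hGa : ∀ v w : N.LVal, (∀ x, N.owner x ∈ A → v (.inl x) = w (.inl x)) →
      (∀ p ∈ A, v (.inr p) = w (.inr p)) → v ∈ Ga → w ∈ Ga)
    (hSa : ∀ v w : N.LVal, (∀ x, N.owner x ∈ A → v (.inl x) = w (.inl x)) →
      (∀ p ∈ A, v (.inr p) = w (.inr p)) → v ∈ Sa → w ∈ Sa)
    (hGb : ∀ v w : N.LVal, (∀ x, N.owner x ∈ B → v (.inl x) = w (.inl x)) →
      (∀ p ∈ B, v (.inr p) = w (.inr p)) → v ∈ Gb → w ∈ Gb)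
    (hSb : ∀ v w : N.LVal, (∀ x, N.owner x ∈ B → v (.inl x) = w (.inl x)) →
      (∀ p ∈ B, v (.inr p) = w (.inr p)) → v ∈ Sb → w ∈ Sb)
    {Z : Set N.LVal} (hte : Z = N.lelapse Z) :
    N.lelapse (N.lreset Rb '' (N.lelapse (N.lreset Ra '' (Z ∩ Ga ∩ Sa)) ∩ Gb ∩ Sb)) ⊆
      N.lelapse (N.lreset Ra '' (N.lelapse (N.lreset Rb '' (Z ∩ Gb ∩ Sb)) ∩ Ga ∩ Sa)) := by
  rintro v ⟨v1, ⟨w1, ⟨⟨hw1e, hw1Gb⟩, hw1Sb⟩, rfl⟩, ⟨ε, hε, rfl⟩⟩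
  obtain ⟨u1, ⟨u0, ⟨⟨hu0Z, hu0Ga⟩, hu0Sa⟩, rfl⟩, ⟨δ, hδ, rfl⟩⟩ := hw1e
  -- w1 := fun y => match y with | inl x => lreset Ra u0 (inl x) | inr p => ... + δ p
  set δ' : Fin N.k → ℝ := fun p => if p ∈ A then 0 else δ p with hδ'def
  set u' : N.LVal := fun y => match y with
    | .inl x => u0 (.inl x)
    | .inr p => u0 (.inr p) + δ' p with hu'def
  have hABa : ∀ p, p ∈ A → p ∉ B := fun p hp hpB => (Finset.disjoint_left.mp hdis hp) hpB
  have hABb : ∀ p, p ∈ B → p ∉ A := fun p hp hpA => (Finset.disjoint_left.mp hdis hpA) hp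
  have hu'Z : u' ∈ Z := by
    rw [hte]
    refine ⟨u0, hu0Z, δ', fun p => ?_, rfl⟩
    by_cases hp : p ∈ A <;> simp [hδ'def, hp, hδ p]
  -- coordinates of w1
  have hw1inl : ∀ x, (fun y => match y with
      | Sum.inl x => (N.lreset Ra u0) (.inl x)
      | Sum.inr p => (N.lreset Ra u0) (.inr p) + δ p : N.LVal) (.inl x)
      = if x ∈ Ra then u0 (.inr (N.owner x)) else u0 (.inl x) := by
    intro x; simp [lreset]
  have hw1inr : ∀ p, (fun y => match y with
      | Sum.inl x => (N.lreset Ra u0) (.inl x)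
      | Sum.inr p => (N.lreset Ra u0) (.inr p) + δ p : N.LVal) (.inr p)
      = u0 (.inr p) + δ p := by
    intro p; simp [lreset]
  have hagreeB_inl : ∀ x, N.owner x ∈ B →
      (fun y => match y with
      | Sum.inl x => (N.lreset Ra u0) (.inl x)
      | Sum.inr p => (N.lreset Ra u0) (.inr p) + δ p : N.LVal) (.inl x) = u' (.inl x) := by
    intro x hx
    rw [hw1inl, if_neg (fun hxa => hABb _ hx (hRa x hxa))]
  have hagreeB_inr : ∀ p, p ∈ B →
      (fun y => match y with
      | Sum.inl x => (N.lreset Ra u0) (.inl x)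
      | Sum.inr p => (N.lreset Ra u0) (.inr p) + δ p : N.LVal) (.inr p) = u' (.inr p) := by
    intro p hp
    rw [hw1inr]
    simp [hu'def, hδ'def, if_neg (hABb p hp)]
  have hu'Gb : u' ∈ Gb := hGb _ _ hagreeB_inl hagreeB_inr hw1Gb
  have hu'Sb : u' ∈ Sb := hSb _ _ hagreeB_inl hagreeB_inr hw1Sb
  set y : N.LVal := N.lreset Rb u' with hydef
  have hyinl : ∀ x, y (.inl x) = if x ∈ Rb then u' (.inr (N.owner x)) else u' (.inl x) := by
    intro x; simp [hydef, lreset]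
  have hyinr : ∀ p, y (.inr p) = u' (.inr p) := by
    intro p; simp [hydef, lreset]
  have hagreeA_inl : ∀ x, N.owner x ∈ A → u0 (.inl x) = y (.inl x) := by
    intro x hx
    rw [hyinl, if_neg (fun hxb => hABa _ hx (hRb x hxb))]
  have hagreeA_inr : ∀ p, p ∈ A → u0 (.inr p) = y (.inr p) := by
    intro p hp
    rw [hyinr]
    simp [hu'def, hδ'def, if_pos hp]
  have hyGa : y ∈ Ga := hGa _ _ hagreeA_inl hagreeA_inr hu0Ga
  have hySa : y ∈ Sa := hSa _ _ hagreeA_inl hagreeA_inr hu0Sa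
  have hymem : y ∈ N.lelapse (N.lreset Rb '' (Z ∩ Gb ∩ Sb)) :=
    ⟨y, ⟨u', ⟨⟨hu'Z, hu'Gb⟩, hu'Sb⟩, rfl⟩, ldelayed_refl' y⟩
  refine ⟨N.lreset Ra y, ⟨y, ⟨⟨hymem, hyGa⟩, hySa⟩, rfl⟩,
    fun p => (δ p - δ' p) + ε p, fun p => ?_, ?_⟩
  · by_cases hp : p ∈ A
    · simp [hδ'def, hp]; exact add_nonneg (hδ p) (hε p)
    · simp [hδ'def, hp]; exact hε p
  · funext z
    cases z with
    | inl x =>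
      show (N.lreset Rb _) (.inl x) = (N.lreset Ra y) (.inl x)
      by_cases hxb : x ∈ Rb
      · have hxa : x ∉ Ra := fun hxa => hABa _ (hRa x hxa) (hRb x hxb)
        simp only [lreset, if_pos hxb, if_neg hxa, hw1inr, hyinl]
        simp [hu'def, hδ'def, if_neg (hABb _ (hRb x hxb))]
      · by_cases hxa : x ∈ Ra
        · simp only [lreset, if_neg hxb, if_pos hxa, hw1inl, hyinr]
          simp [hu'def, hδ'def, if_pos (hRa x hxa)]
        · simp only [lreset, if_neg hxb, if_neg hxa, hw1inl, hyinl]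
          rfl
    | inr p =>
      show (N.lreset Rb _) (.inr p) + ε p = (N.lreset Ra y) (.inr p) + ((δ p - δ' p) + ε p)
      simp only [lreset, hw1inr, hyinr]
      show u0 (.inr p) + δ p + ε p = u' (.inr p) + ((δ p - δ' p) + ε p)
      simp [hu'def]; ring

end Network
namespace Network

variable {N : Network}

lemma lzstep_comm {a b : N.Act} (hdis : Disjoint (N.dom a) (N.dom b))
    {q q1 q2 : N.State} {Z Z1 Z2 : Set N.LVal} (hte : Z = N.lelapse Z)
    (ha : N.lzstep a (q, Z) (q1, Z1)) (hb : N.lzstep b (q1, Z1) (q2, Z2)) :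
    ∃ q1' Z1', N.lzstep b (q, Z) (q1', Z1') ∧ N.lzstep a (q1', Z1') (q2, Z2) ∧
      Z1' = N.lelapse Z1' := by
  obtain ⟨tra, htra, htraq, hZ1, _⟩ := ha
  obtain ⟨trb, htrb, htrbq, hZ2, hZ2ne⟩ := hb
  set Ra : Set N.Clock := {x | ∃ p h, x ∈ (tra p h).2.2.1} with hRadef
  set Rb : Set N.Clock := {x | ∃ p h, x ∈ (trb p h).2.2.1} with hRbdef
  set Ga : Set N.LVal := {v | ∀ p (h : p ∈ N.dom a), N.lgsat v (tra p h).2.1} with hGadef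
  set Gb : Set N.LVal := {v | ∀ p (h : p ∈ N.dom b), N.lgsat v (trb p h).2.1} with hGbdef
  set Sa : Set N.LVal :=
    {v | ∀ p ∈ N.dom a, ∀ p' ∈ N.dom a, v (.inr p) = v (.inr p')} with hSadef
  set Sb : Set N.LVal :=
    {v | ∀ p ∈ N.dom b, ∀ p' ∈ N.dom b, v (.inr p) = v (.inr p')} with hSbdef
  have hRa : ∀ x ∈ Ra, N.owner x ∈ N.dom a := by
    rintro x ⟨p, h, hx⟩
    rw [(N.trans_wf a p _ (htra p h).1).2 x hx]; exact h
  have hRb : ∀ x ∈ Rb, N.owner x ∈ N.dom b := by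
    rintro x ⟨p, h, hx⟩
    rw [(N.trans_wf b p _ (htrb p h).1).2 x hx]; exact h
  have hG : ∀ (d : N.Act) (tr : ∀ p, p ∈ N.dom d → N.Loc p × Guard N.Clock × Set N.Clock × N.Loc p),
      (∀ p (h : p ∈ N.dom d), tr p h ∈ N.Trans d p) →
      ∀ v w : N.LVal, (∀ x, N.owner x ∈ N.dom d → v (.inl x) = w (.inl x)) →
      (∀ p ∈ N.dom d, v (.inr p) = w (.inr p)) →
      v ∈ {v | ∀ p (h : p ∈ N.dom d), N.lgsat v (tr p h).2.1} →
      w ∈ {v | ∀ p (h : p ∈ N.dom d), N.lgsat v (tr p h).2.1} := by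
    intro d tr htr v w hinl hinr hv p h c hc
    have how : N.owner c.1 = p := (N.trans_wf d p _ (htr p h)).1 c hc
    have h1 : v (.inr (N.owner c.1)) = w (.inr (N.owner c.1)) := hinr _ (how ▸ h)
    have h2 : v (.inl c.1) = w (.inl c.1) := hinl _ (how ▸ h)
    have := hv p h c hc
    rwa [h1, h2] at this
  have hS : ∀ (d : N.Act), ∀ v w : N.LVal,
      (∀ p ∈ N.dom d, v (.inr p) = w (.inr p)) →
      v ∈ {v : N.LVal | ∀ p ∈ N.dom d, ∀ p' ∈ N.dom d, v (.inr p) = v (.inr p')} →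
      w ∈ {v : N.LVal | ∀ p ∈ N.dom d, ∀ p' ∈ N.dom d, v (.inr p) = v (.inr p')} := by
    intro d v w hinr hv p hp p' hp'
    rw [← hinr p hp, ← hinr p' hp']; exact hv p hp p' hp'
  set Zb : Set N.LVal := N.lelapse (N.lreset Rb '' (Z ∩ Gb ∩ Sb)) with hZbdef
  have hZ1' : Z1 = N.lelapse (N.lreset Ra '' (Z ∩ Ga ∩ Sa)) := hZ1
  have hZ2' : Z2 = N.lelapse (N.lreset Rb '' (Z1 ∩ Gb ∩ Sb)) := hZ2
  have hkey : Z2 = N.lelapse (N.lreset Ra '' (Zb ∩ Ga ∩ Sa)) := by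
    rw [hZ2', hZ1']
    apply Set.Subset.antisymm
    · exact comm_key hdis hRa hRb (hG a tra fun p h => (htra p h).1)
        (fun v w _ hr => hS a v w hr) (hG b trb fun p h => (htrb p h).1)
        (fun v w _ hr => hS b v w hr) hte
    · exact comm_key hdis.symm hRb hRa (hG b trb fun p h => (htrb p h).1)
        (fun v w _ hr => hS b v w hr) (hG a tra fun p h => (htra p h).1)
        (fun v w _ hr => hS a v w hr) hte
  have hq1 : ∀ p ∈ N.dom b, q1 p = q p := by
    intro p hp
    exact htraq p (fun hpa => Finset.disjoint_left.mp hdis hpa hp)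
  set q1' : N.State := fun p => if h : p ∈ N.dom b then (trb p h).2.2.2 else q p with hq1'def
  have hZbne : Zb.Nonempty := by
    obtain ⟨v, hv⟩ := hZ2ne
    rw [hkey] at hv
    obtain ⟨v1, ⟨w, hw, rfl⟩, _⟩ := hv
    exact ⟨w, hw.1.1⟩
  refine ⟨q1', Zb, ⟨trb, ?_, ?_, ?_, hZbne⟩, ⟨tra, ?_, ?_, ?_, hZ2ne⟩, (lelapse_idem' _).symm⟩
  · intro p h
    refine ⟨(htrb p h).1, ?_, ?_⟩
    · rw [(htrb p h).2.1]; exact hq1 p h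
    · simp [hq1'def, h, (htrb p h).2.2]
  · intro p hp
    simp [hq1'def, hp]
  · rfl
  · intro p h
    have hpb : p ∉ N.dom b := fun hpb => Finset.disjoint_left.mp hdis h hpb
    refine ⟨(htra p h).1, ?_, ?_⟩
    · rw [(htra p h).2.1]; simp [hq1'def, hpb]
    · rw [(htra p h).2.2, ← htrbq p hpb]
  · intro p hp
    by_cases hpb : p ∈ N.dom b
    · simp only [hq1'def, dif_pos hpb]
      exact ((htrb p hpb).2.2).symm
    · rw [htrbq p hpb, htraq p hp]
      simp [hq1'def, hpb]
  · rw [hkey]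

end Network
namespace Network

variable {N : Network}

lemma lzstep_elapse {b : N.Act} {c c' : N.State × Set N.LVal} (h : N.lzstep b c c') :
    c'.2 = N.lelapse c'.2 := by
  obtain ⟨tr, _, _, hz, _⟩ := h
  rw [hz, lelapse_idem']

lemma lzrun_swap {a b : N.Act} (hdis : Disjoint (N.dom a) (N.dom b)) :
    ∀ (u : List N.Act) {w : List N.Act} {q : N.State} {Z : Set N.LVal}
      {c : N.State × Set N.LVal}, Z = N.lelapse Z →
      N.LZRun (u ++ a :: b :: w) (q, Z) c → N.LZRun (u ++ b :: a :: w) (q, Z) c := by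
  intro u
  induction u with
  | nil =>
    intro w q Z c hte hr
    simp only [List.nil_append] at hr ⊢
    cases hr with
    | cons ha h1 =>
      rename_i c1
      cases h1 with
      | cons hb h2 =>
        rename_i c2
        obtain ⟨q1, Z1⟩ := c1
        obtain ⟨q2, Z2⟩ := c2
        obtain ⟨q1', Z1', hb', ha', -⟩ := lzstep_comm hdis hte ha hb
        exact LZRun.cons hb' (LZRun.cons ha' h2)
  | cons x u ih =>
    intro w q Z c hte hr
    simp only [List.cons_append] at hr ⊢
    cases hr with
    | cons hb h =>
      rename_i c1
      obtain ⟨q1, Z1⟩ := c1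
      exact LZRun.cons hb (ih (lzstep_elapse hb) h)

end Network

theorem stmt13 (N : Network) (u w : List N.Act) (h : N.equiv u w)
    (q q' : N.State) (Z Z' : Set N.LVal) (hZ : N.IsLZone Z) (hte : Z = N.lelapse Z)
    (hr : N.LZRun u (q, Z) (q', Z')) : N.LZRun w (q, Z) (q', Z') := by
  induction h with
  | swap u w a b hd => exact Network.lzrun_swap hd u hte hr
  | refl u => exact hr
  | trans h1 h2 ih1 ih2 => exact ih2 (ih1 hr)
end

section
/- Completeness of local sync graphs: if state q is reachable by a global run of the network N, then some node (q, Z) with Z nonempty is reachable from the initial node in every local sync graph of N based on an abstraction induced by a time-abstract simulation. -/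
open Classical

section Aux

variable (N : Network)

lemma aux_ldelayed_refl (v : N.LVal) : N.ldelayed v v := by
  refine ⟨fun _ => 0, fun _ => le_refl _, ?_⟩
  funext y; cases y <;> simp

lemma aux_ldelayed_trans {a b c : N.LVal} (h1 : N.ldelayed a b) (h2 : N.ldelayed b c) :
    N.ldelayed a c := by
  obtain ⟨δ1, h1n, rfl⟩ := h1
  obtain ⟨δ2, h2n, rfl⟩ := h2
  refine ⟨fun p => δ1 p + δ2 p, fun p => add_nonneg (h1n p) (h2n p), ?_⟩
  funext y; cases y <;> simp <;> ring

lemma aux_lelapse_closed {S : Set N.LVal} {v u : N.LVal}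
    (hv : v ∈ N.lelapse S) (hd : N.ldelayed v u) : u ∈ N.lelapse S := by
  obtain ⟨v0, hv0, hd0⟩ := hv
  exact ⟨v0, hv0, aux_ldelayed_trans N hd0 hd⟩

lemma aux_toGlobal_init : N.toGlobal N.lvalInit = N.gvalInit := by
  funext y; cases y <;> rfl

lemma aux_zone_closed {abs} (G : SyncGraph N abs) {s} (hs : s ∈ G.nodes) :
    ∃ S, s.2 = N.lelapse S := by
  rcases (G.reach s hs).cases_tail with h | ⟨c, _, hedge⟩
  · rw [h]; exact ⟨{N.lvalInit}, rfl⟩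
  · obtain ⟨b, hstep⟩ := G.edges_lzg _ _ hedge
    obtain ⟨tr, _, _, h3, _⟩ := hstep
    exact ⟨_, h3⟩

lemma aux_step_zone {Z : Set N.LVal} {S} (hZ : Z = N.lelapse S)
    {v : N.LVal} (hvZ : v ∈ Z) (hvs : N.Synchronized v)
    {q : N.State} {b : N.Act} {δ : ℝ} (hδ : 0 ≤ δ) {c' : N.State × N.GVal}
    (hact : N.gact b (q, N.gdelay (N.toGlobal v) δ) c') :
    ∃ Z', N.lzstep b (q, Z) (c'.1, Z') ∧
      ∃ v' ∈ N.syncSet Z', N.toGlobal v' = c'.2 := by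
  classical
  set u : N.LVal := fun y => match y with
    | .inl x => v (.inl x)
    | .inr p => v (.inr p) + δ with hu_def
  have hdu : N.ldelayed v u := ⟨fun _ => δ, fun _ => hδ, rfl⟩
  have huZ : u ∈ Z := by
    rw [hZ] at hvZ ⊢; exact aux_lelapse_closed N hvZ hdu
  have husync : N.Synchronized u := by
    intro p p'
    show v (.inr p) + δ = v (.inr p') + δ
    rw [hvs p p']
  have hglob : N.toGlobal u = N.gdelay (N.toGlobal v) δ := by
    funext y; cases y <;> rfl
  obtain ⟨tr, htr, hout, hg, hres⟩ := hact
  set R : Set N.Clock := {x | ∃ p h, x ∈ (tr p h).2.2.1} with hR_def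
  have hgu : ∀ p (h : p ∈ N.dom b), N.lgsat u (tr p h).2.1 := by
    intro p hp c hc
    have h1 := hg p hp c hc
    have e1 : u (.inr (N.owner c.1)) = N.gdelay (N.toGlobal v) δ (.inr ()) := by
      show v (.inr (N.owner c.1)) + δ = N.toGlobal v (.inr ()) + δ
      show v (.inr (N.owner c.1)) + δ = v (.inr ⟨0, N.kpos⟩) + δ
      rw [hvs (N.owner c.1) ⟨0, N.kpos⟩]
    have e2 : u (.inl c.1) = N.gdelay (N.toGlobal v) δ (.inl c.1) := rfl
    show Cmp.sat c.2.1 (u (.inr (N.owner c.1)) - u (.inl c.1)) c.2.2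
    rw [e1, e2]; exact h1
  set v' : N.LVal := N.lreset R u with hv'_def
  have hv'mem : v' ∈ N.lelapse ((N.lreset R) ''
      (Z ∩ {w | ∀ p (h : p ∈ N.dom b), N.lgsat w (tr p h).2.1}
         ∩ {w | ∀ p ∈ N.dom b, ∀ p' ∈ N.dom b, w (.inr p) = w (.inr p')})) := by
    refine ⟨v', ⟨u, ⟨⟨huZ, hgu⟩, fun p _ p' _ => husync p p'⟩, rfl⟩, aux_ldelayed_refl N v'⟩
  have hv'sync : N.Synchronized v' := by
    intro p p'
    show u (.inr p) = u (.inr p')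
    exact husync p p'
  refine ⟨_, ⟨tr, htr, hout, rfl, ⟨v', hv'mem⟩⟩, v', ⟨hv'mem, hv'sync⟩, ?_⟩
  rw [hres, ← hglob]
  funext y
  cases y with
  | inl x =>
    show N.lreset R u (.inl x) = N.greset R (N.toGlobal u) (.inl x)
    simp only [Network.lreset, Network.greset]
    by_cases hx : x ∈ R
    · rw [if_pos hx, if_pos hx]
      exact husync (N.owner x) ⟨0, N.kpos⟩
    · rw [if_neg hx, if_neg hx]
      rfl
  | inr val => rfl

lemma aux_chain_step (sim : N.GVal → N.GVal → Prop) (hsim : N.TASim sim)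
    {w g : N.GVal} (h : Relation.ReflTransGen sim w g)
    {q : N.State} {b : N.Act} {δ : ℝ} {c' : N.State × N.GVal} (hδ : 0 ≤ δ)
    (hact : N.gact b (q, N.gdelay w δ) c') :
    ∃ δ2, 0 ≤ δ2 ∧ ∃ g', N.gact b (q, N.gdelay g δ2) (c'.1, g') ∧
      Relation.ReflTransGen sim c'.2 g' := by
  induction h with
  | refl =>
    refine ⟨δ, hδ, c'.2, ?_, Relation.ReflTransGen.refl⟩
    rw [Prod.mk.eta]; exact hact
  | tail h1 h2 ih =>
    obtain ⟨δm, hδm, m', hactm, hrtg⟩ := ih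
    obtain ⟨δ2, hδ2, g', hactg, hsimm⟩ := hsim _ _ h2 q b δm c'.1 m' hδm hactm
    exact ⟨δ2, hδ2, g', hactg, hrtg.tail hsimm⟩

lemma aux_main (sim : N.GVal → N.GVal → Prop) (hsim : N.TASim sim)
    (G : SyncGraph N (fun W => {v | ∃ v' ∈ W, sim v v'}))
    {u : List N.Act} {s t : N.State × N.GVal} (h : N.GRun u s t) :
    ∀ Z v, (s.1, Z) ∈ G.nodes → ¬ G.covered (s.1, Z) → (∃ S, Z = N.lelapse S) →
      v ∈ N.syncSet Z → Relation.ReflTransGen sim s.2 (N.toGlobal v) →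
      ∃ Z', Z'.Nonempty ∧ (t.1, Z') ∈ G.nodes ∧
        Relation.ReflTransGen G.edges (N.initState, N.lzoneInit) (t.1, Z') := by
  induction h with
  | nil δ hδ =>
    intro Z v hnode _ _ hv _
    exact ⟨Z, ⟨v, hv.1⟩, hnode, G.reach _ hnode⟩
  | @cons b u' q w c1 c2 δ hδ hb hrun ih =>
    intro Z v hnode hunc hcl hv hchain
    obtain ⟨S, hS⟩ := hcl
    obtain ⟨δ2, hδ2, g', hact2, hchain'⟩ := aux_chain_step N sim hsim hchain hδ hb
    obtain ⟨Z1, hstep, v1, hv1, hglob1⟩ :=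
      aux_step_zone N hS hv.1 hv.2 hδ2 (c' := (c1.1, g')) hact2
    have hedge := G.unc_succ (q, Z) hnode hunc b (c1.1, Z1) hstep
    have hnode1 := (G.edges_mem _ _ hedge).2
    have hchain1 : Relation.ReflTransGen sim c1.2 (N.toGlobal v1) := by
      rw [hglob1]; exact hchain'
    by_cases hcov : G.covered (c1.1, Z1)
    · obtain ⟨s', hs'node, hs'unc, hfst, hsub⟩ := G.cov_sub _ hnode1 hcov
      obtain ⟨q2, Z2⟩ := s'
      have hfst' : c1.1 = q2 := hfst
      subst hfst'
      have hmem : N.toGlobal v1 ∈ N.toGlobal '' N.syncSet Z1 := ⟨v1, hv1, rfl⟩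
      obtain ⟨gv, ⟨v2, hv2, rfl⟩, hsimv⟩ := hsub hmem
      exact ih Z2 v2 hs'node hs'unc (aux_zone_closed N G hs'node) hv2
        (hchain1.tail hsimv)
    · obtain ⟨_, _, _, hz3, _⟩ := hstep
      exact ih Z1 v1 hnode1 hcov ⟨_, hz3⟩ hv1 hchain1

end Aux

theorem stmt18 (N : Network) (sim : N.GVal → N.GVal → Prop) (hsim : N.TASim sim)
    (hrefl : ∀ v, sim v v)
    (G : SyncGraph N (fun W => {v | ∃ v' ∈ W, sim v v'}))
    (q : N.State) (hq : N.GReach q) :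
    ∃ Z : Set N.LVal, Z.Nonempty ∧ (q, Z) ∈ G.nodes ∧
      Relation.ReflTransGen G.edges (N.initState, N.lzoneInit) (q, Z) := by
  obtain ⟨u, vfin, hrun⟩ := hq
  have hinitmem : N.lvalInit ∈ N.lzoneInit :=
    ⟨N.lvalInit, rfl, aux_ldelayed_refl N _⟩
  have hsync : N.Synchronized N.lvalInit := fun _ _ => rfl
  have hchain : Relation.ReflTransGen sim N.gvalInit (N.toGlobal N.lvalInit) := by
    rw [aux_toGlobal_init]
  exact aux_main N sim hsim G hrun N.lzoneInit N.lvalInit G.init_mem G.init_unc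
    ⟨{N.lvalInit}, rfl⟩ ⟨hinitmem, hsync⟩ hchain
end
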